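/- arXiv:1904.11072 — 2 statements merged into one kernel-verified Lean document; each statement's English description precedes it below -/
import Mathlib

section
/- Let (X,G,Φ) and (X',G',Ψ) be Cantor actions with G finitely generated, and let h : X → X' be a continuous orbit equivalence between them. If there exist y' ∈ X' and an adapted neighborhood basis {V_ℓ} for Ψ at y' whose stabilizer chain K'_ℓ := {f ∈ G(Ψ) : f(w) = w for all w ∈ V_ℓ} is eventually constant (i.e., Ψ is stable), then for every x ∈ X and every adapted neighborhood basis {U_ℓ} for Φ at x, the stabilizer chain K_ℓ := {f ∈ G(Φ) : f(z) = z for all z ∈ U_ℓ} is eventually constant (i.e., Φ is stable). -/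
open Set Topology Filter

section CantorActionDefs

variable {X : Type*} [MetricSpace X] {G : Type*} [Group G]

/-- `Φ : G → Homeo(X)` is a group homomorphism, i.e. an action of `G` on `X` by
homeomorphisms. -/
def IsActionHom (Φ : G → X ≃ₜ X) : Prop :=
  (∀ x : X, Φ 1 x = x) ∧ ∀ g h : G, ∀ x : X, Φ (g * h) x = Φ g (Φ h x)

/-- The action is minimal: every orbit is dense. -/
def IsMinimalAction (Φ : G → X ≃ₜ X) : Prop :=
  ∀ x : X, Dense (Set.range fun g : G => Φ g x)

/-- The family `{Φ g : g ∈ G}` is equicontinuous with respect to the metric on `X`. -/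
def IsEquicontinuousAction (Φ : G → X ≃ₜ X) : Prop :=
  ∀ ε : ℝ, 0 < ε → ∃ δ : ℝ, 0 < δ ∧
    ∀ g : G, ∀ x y : X, dist x y < δ → dist (Φ g x) (Φ g y) < ε

/-- A Cantor action: a minimal equicontinuous action by homeomorphisms. -/
def IsCantorAction (Φ : G → X ≃ₜ X) : Prop :=
  IsActionHom Φ ∧ IsMinimalAction Φ ∧ IsEquicontinuousAction Φ

/-- A clopen subset adapted to the action: nonempty, clopen, and any translate meeting it
equals it. -/
def IsAdapted (Φ : G → X ≃ₜ X) (U : Set X) : Prop :=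
  U.Nonempty ∧ IsClopen U ∧ ∀ g : G, (Φ g '' U ∩ U).Nonempty → Φ g '' U = U

/-- The Ellis (closure) group `G(Φ)`: the closure of `{Φ g : g ∈ G}` in `C(X,X)` with the
compact-open topology. -/
def actionClosure (Φ : G → X ≃ₜ X) : Set C(X, X) :=
  closure (Set.range fun g : G => (Φ g : C(X, X)))

/-- An adapted neighborhood basis at `x`: a properly descending chain of adapted clopen
sets starting at `X`, containing `x`, with intersection `{x}`. -/
def IsAdaptedBasis (Φ : G → X ≃ₜ X) (x : X) (U : ℕ → Set X) : Prop :=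
  U 0 = Set.univ ∧ (∀ ℓ : ℕ, IsAdapted Φ (U ℓ)) ∧ (∀ ℓ : ℕ, x ∈ U ℓ) ∧
    (∀ ℓ : ℕ, U (ℓ + 1) ⊂ U ℓ) ∧ (⋂ ℓ : ℕ, U ℓ) = ({x} : Set X)

/-- The stabilizer chain `K_ℓ`: elements of the Ellis group fixing `U ℓ` pointwise. -/
def stabChain (Φ : G → X ≃ₜ X) (U : ℕ → Set X) (ℓ : ℕ) : Set C(X, X) :=
  {f ∈ actionClosure Φ | ∀ z ∈ U ℓ, f z = z}

/-- The stabilizer chain is eventually constant (the action is stable along `U`). -/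
def IsStableChain (Φ : G → X ≃ₜ X) (U : ℕ → Set X) : Prop :=
  ∃ ℓ₀ : ℕ, ∀ ℓ : ℕ, ℓ₀ ≤ ℓ → stabChain Φ U ℓ = stabChain Φ U ℓ₀

/-- The action of the Ellis group is locally completely quasi-analytic. -/
def IsLCQA (Φ : G → X ≃ₜ X) : Prop :=
  ∃ ε : ℝ, 0 < ε ∧ ∀ U : Set X, IsAdapted Φ U → Metric.diam U < ε →
    ∀ V : Set X, IsAdapted Φ V → V ⊆ U →
      ∀ f₁ ∈ actionClosure Φ, ∀ f₂ ∈ actionClosure Φ,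
        (∀ z ∈ V, f₁ z = f₂ z) → ∀ z ∈ U, f₁ z = f₂ z

/-- `f` is a non-Hausdorff element of the Ellis group at `x`. -/
def IsNonHausdorffElem (Φ : G → X ≃ₜ X) (f : C(X, X)) (x : X) : Prop :=
  f ∈ actionClosure Φ ∧ f x = x ∧
    (∀ W : Set X, IsClopen W → x ∈ W → ¬ ∀ z ∈ W, f z = z) ∧
    ∃ (xs : ℕ → X) (W : ℕ → Set X), Filter.Tendsto xs Filter.atTop (nhds x) ∧
      ∀ i : ℕ, xs i ∈ W i ∧ IsClopen (W i) ∧ ⇑f '' W i = W i ∧ ∀ z ∈ W i, f z = z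

/-- The restrictions to an invariant set `U` of the maps `Φ g` with `Φ g (U) = U`,
as elements of `C(U,U)`. -/
def restrictedMaps (Φ : G → X ≃ₜ X) (U : Set X) : Set C(U, U) :=
  {u : C(U, U) | ∃ g : G, Φ g '' U = U ∧ ∀ z : U, (u z : X) = Φ g (z : X)}

/-- The stabilizer subgroup `G_U = {g : G | Φ g (U) = U}` of a set `U`. -/
def setStabilizer (Φ : G → X ≃ₜ X) (hΦ : IsActionHom Φ) (U : Set X) : Subgroup G where
  carrier := {g : G | Φ g '' U = U}
  one_mem' := by
    show ⇑(Φ 1) '' U = U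
    have h : ⇑(Φ 1) = id := funext hΦ.1
    rw [h, Set.image_id]
  mul_mem' := by
    intro a b ha hb
    show ⇑(Φ (a * b)) '' U = U
    have h : ⇑(Φ (a * b)) = ⇑(Φ a) ∘ ⇑(Φ b) := funext fun z => hΦ.2 a b z
    rw [h, Set.image_comp]
    rw [show ⇑(Φ b) '' U = U from hb, show ⇑(Φ a) '' U = U from ha]
  inv_mem' := by
    intro a ha
    show ⇑(Φ a⁻¹) '' U = U
    have hcomp : ⇑(Φ a⁻¹) ∘ ⇑(Φ a) = id := funext fun z => by
      show Φ a⁻¹ (Φ a z) = z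
      have h2 := hΦ.2 a⁻¹ a z
      rw [inv_mul_cancel] at h2
      rw [← h2]
      exact hΦ.1 z
    calc ⇑(Φ a⁻¹) '' U = ⇑(Φ a⁻¹) '' (⇑(Φ a) '' U) := by
            rw [show ⇑(Φ a) '' U = U from ha]
      _ = (⇑(Φ a⁻¹) ∘ ⇑(Φ a)) '' U := (Set.image_comp _ _ _).symm
      _ = U := by rw [hcomp, Set.image_id]

end CantorActionDefs

section ChainDefs

variable {G : Type*} [Group G]

/-- A group chain in `G`: descending subgroups starting at `G`, each of finite index in
the previous one. -/
def IsGroupChain (K : ℕ → Subgroup G) : Prop :=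
  K 0 = ⊤ ∧ ∀ ℓ : ℕ, K (ℓ + 1) ≤ K ℓ ∧ (K (ℓ + 1)).relIndex (K ℓ) ≠ 0

/-- The inverse limit `lim← G ⧸ C ℓ` of the coset spaces along a chain, as a subset of
the product. -/
def chainLimitSet (C : ℕ → Subgroup G) : Set (∀ ℓ : ℕ, G ⧸ C ℓ) :=
  {σ | ∀ ℓ : ℕ, ∃ g : G, σ ℓ = (g : G ⧸ C ℓ) ∧ σ (ℓ + 1) = (g : G ⧸ C (ℓ + 1))}

/-- The inverse limit topology on `lim← G ⧸ C ℓ`: the subspace topology from the product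
of the discrete coset spaces. -/
def chainLimitTop (C : ℕ → Subgroup G) : TopologicalSpace (chainLimitSet C) :=
  TopologicalSpace.induced Subtype.val
    (@Pi.topologicalSpace ℕ (fun ℓ => G ⧸ C ℓ) fun _ => ⊥)

/-- The basepoint `(e C_ℓ)_ℓ` of the inverse limit. -/
def chainBasepoint (C : ℕ → Subgroup G) : chainLimitSet C :=
  ⟨fun ℓ => ((1 : G) : G ⧸ C ℓ), fun _ => ⟨1, rfl, rfl⟩⟩

theorem smul_mem_chainLimitSet {C : ℕ → Subgroup G} (g : G) {σ : ∀ ℓ : ℕ, G ⧸ C ℓ}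
    (hσ : σ ∈ chainLimitSet C) : (fun ℓ => g • σ ℓ) ∈ chainLimitSet C := by
  intro ℓ
  obtain ⟨k, h1, h2⟩ := hσ ℓ
  refine ⟨g * k, ?_, ?_⟩
  · show g • σ ℓ = _
    rw [h1]; rfl
  · show g • σ (ℓ + 1) = _
    rw [h2]; rfl

/-- The conjugate subgroup `g H g⁻¹`. -/
def conjSubgroup (g : G) (H : Subgroup G) : Subgroup G :=
  H.map (MulAut.conj g).toMonoidHom

/-- Equivalence of group chains (interlacing). -/
def ChainsEquivalent (Gc Hc : ℕ → Subgroup G) : Prop :=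
  ∃ K : ℕ → Subgroup G, IsGroupChain K ∧
    ∃ ls js : ℕ → ℕ, StrictMono ls ∧ StrictMono js ∧
      ∀ k : ℕ, K (2 * k) = Gc (ls k) ∧ K (2 * k + 1) = Hc (js k)

/-- Conjugate equivalence of group chains. -/
def ChainsConjugateEquivalent (Gc Hc : ℕ → Subgroup G) : Prop :=
  ∃ gs : ℕ → G, (∀ ℓ : ℕ, (gs ℓ)⁻¹ * gs (ℓ + 1) ∈ Gc ℓ) ∧
    ChainsEquivalent (fun ℓ => conjSubgroup (gs ℓ) (Gc ℓ)) Hc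

end ChainDefs

section TwoSpaces

variable {X : Type*} [MetricSpace X] {X' : Type*} [MetricSpace X']
variable {G : Type*} [Group G] {G' : Type*} [Group G']

/-- A continuous orbit equivalence between two actions, implemented by a homeomorphism
`h : X → X'` with locally constant orbit transfer functions. -/
def IsContinuousOrbitEquivalence (Φ : G → X ≃ₜ X) (Ψ : G' → X' ≃ₜ X') (h : X ≃ₜ X') :
    Prop :=
  (∀ (x : X) (g : G), ∃ (k : G') (O : Set X), IsOpen O ∧ x ∈ O ∧
      ∀ z ∈ O, Ψ k (h z) = h (Φ g z)) ∧
    ∀ (y : X') (k : G'), ∃ (g : G) (O : Set X'), IsOpen O ∧ y ∈ O ∧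
      ∀ w ∈ O, Φ g (h.symm w) = h.symm (Ψ k w)

end TwoSpaces

section AuxLemmas

variable {Y : Type*} [MetricSpace Y] [CompactSpace Y] {H : Type*} [Group H]

lemma basis_antitone {Φ : H → Y ≃ₜ Y} {x : Y} {U : ℕ → Set Y}
    (hU : IsAdaptedBasis Φ x U) : Antitone U :=
  antitone_nat_of_succ_le fun n => (hU.2.2.2.1 n).subset

lemma basis_nbhd {Φ : H → Y ≃ₜ Y} {x : Y} {U : ℕ → Set Y}
    (hU : IsAdaptedBasis Φ x U) {N : Set Y} (hN : IsOpen N) (hxN : x ∈ N) :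
    ∃ ℓ, U ℓ ⊆ N := by
  have hcov : Nᶜ ⊆ ⋃ ℓ, (U ℓ)ᶜ := by
    intro z hz
    by_contra hc
    simp only [Set.mem_iUnion, Set.mem_compl_iff, not_exists, not_not] at hc
    have hzi : z ∈ ⋂ ℓ, U ℓ := Set.mem_iInter.mpr hc
    rw [hU.2.2.2.2] at hzi
    exact hz (Set.mem_singleton_iff.mp hzi ▸ hxN)
  have hcomp : IsCompact Nᶜ := hN.isClosed_compl.isCompact
  obtain ⟨t, ht⟩ := hcomp.elim_finite_subcover (fun ℓ => (U ℓ)ᶜ)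
    (fun ℓ => (hU.2.1 ℓ).2.1.isClosed.isOpen_compl) hcov
  refine ⟨t.sup id, fun z hz => ?_⟩
  by_contra hzN
  obtain ⟨i, hit, hiz⟩ := Set.mem_iUnion₂.mp (ht hzN)
  exact hiz (basis_antitone hU (Finset.le_sup (f := id) hit) hz)

lemma totallyBounded_actionRange (Ψ : H → Y ≃ₜ Y) (heq : IsEquicontinuousAction Ψ) :
    TotallyBounded (Set.range fun k : H => (Ψ k : C(Y, Y))) := by
  classical
  rw [Metric.totallyBounded_iff]
  intro ε εpos
  obtain ⟨δ, δpos, hδ⟩ := heq (ε / 5) (by positivity)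
  obtain ⟨Fs, _, hFfin, hFcov⟩ :=
    finite_cover_balls_of_compact (isCompact_univ (X := Y)) δpos
  obtain ⟨Ps, _, hPfin, hPcov⟩ :=
    finite_cover_balls_of_compact (isCompact_univ (X := Y)) (show (0:ℝ) < ε / 5 by positivity)
  haveI := hFfin.to_subtype
  haveI := hPfin.to_subtype
  have hchoice : ∀ (k : H) (t : Y), ∃ p, p ∈ Ps ∧ dist (Ψ k t) p < ε / 5 := by
    intro k t
    have := hPcov (Set.mem_univ (Ψ k t))
    obtain ⟨p, hp, hd⟩ := Set.mem_iUnion₂.mp this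
    exact ⟨p, hp, Metric.mem_ball.mp hd⟩
  set pat : H → (Fs → Ps) := fun k t => ⟨(hchoice k t).choose, (hchoice k t).choose_spec.1⟩
    with hpatdef
  have hpat : ∀ (k : H) (t : Fs), dist (Ψ k (t : Y)) ((pat k t : Y)) < ε / 5 :=
    fun k t => (hchoice k (t : Y)).choose_spec.2
  have hfin : (Set.range pat).Finite := Set.toFinite _
  set c : (Fs → Ps) → C(Y, Y) := fun q =>
    if hq : q ∈ Set.range pat then (Ψ hq.choose : C(Y, Y)) else (Ψ 1 : C(Y, Y)) with hcdef
  refine ⟨c '' Set.range pat, hfin.image c, ?_⟩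
  rintro f ⟨k, rfl⟩
  have hq : pat k ∈ Set.range pat := ⟨k, rfl⟩
  refine Set.mem_iUnion₂.mpr ⟨c (pat k), Set.mem_image_of_mem c hq, ?_⟩
  rw [Metric.mem_ball]
  have hceq : c (pat k) = (Ψ hq.choose : C(Y, Y)) := dif_pos hq
  set k' := hq.choose with hk'def
  have hk'eq : pat k' = pat k := hq.choose_spec
  rw [hceq, ContinuousMap.dist_lt_iff εpos]
  intro z
  obtain ⟨t, htF, htz⟩ : ∃ t ∈ Fs, dist z t < δ := by
    have := hFcov (Set.mem_univ z)
    obtain ⟨t, htF, hd⟩ := Set.mem_iUnion₂.mp this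
    exact ⟨t, htF, Metric.mem_ball.mp hd⟩
  have h1 : dist (Ψ k z) (Ψ k t) < ε / 5 := hδ k z t htz
  have h4 : dist (Ψ k' t) (Ψ k' z) < ε / 5 := hδ k' t z (by rwa [dist_comm])
  have h2 : dist (Ψ k t) ((pat k ⟨t, htF⟩ : Y)) < ε / 5 := hpat k ⟨t, htF⟩
  have h3 : dist ((pat k ⟨t, htF⟩ : Y)) (Ψ k' t) < ε / 5 := by
    have := hpat k' ⟨t, htF⟩
    rw [hk'eq] at this
    rwa [dist_comm]
  have hmid : dist (Ψ k t) (Ψ k' t) < ε / 5 + ε / 5 :=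
    lt_of_le_of_lt (dist_triangle _ ((pat k ⟨t, htF⟩ : Y)) _) (add_lt_add h2 h3)
  have htot : dist (Ψ k z) (Ψ k' z) < ε / 5 + (ε / 5 + ε / 5) + ε / 5 :=
    lt_of_le_of_lt (dist_triangle4 _ (Ψ k t) (Ψ k' t) _)
      (by exact add_lt_add (add_lt_add h1 hmid) h4)
  calc dist ((Ψ k : C(Y, Y)) z) ((Ψ k' : C(Y, Y)) z) = dist (Ψ k z) (Ψ k' z) := rfl
    _ < ε / 5 + (ε / 5 + ε / 5) + ε / 5 := htot
    _ ≤ ε := by linarith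

lemma isCompact_actionClosure (Ψ : H → Y ≃ₜ Y) (heq : IsEquicontinuousAction Ψ) :
    IsCompact (actionClosure Ψ) :=
  TotallyBounded.isCompact_of_isClosed
    (totallyBounded_actionRange Ψ heq).closure isClosed_closure

lemma comp_id_of_tendsto {A B : ℕ → C(Y, Y)} {a b : C(Y, Y)}
    (hA : Tendsto A atTop (𝓝 a)) (hB : Tendsto B atTop (𝓝 b))
    (heq : ∀ ε : ℝ, 0 < ε → ∃ δ : ℝ, 0 < δ ∧ ∀ (n : ℕ) (u v : Y),
      dist u v < δ → dist (B n u) (B n v) < ε)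
    (hid : ∀ (n : ℕ) (w : Y), B n (A n w) = w) (w : Y) : b (a w) = w := by
  refine eq_of_forall_dist_le fun ε εpos => ?_
  obtain ⟨δa, δapos, hδa⟩ := heq (ε / 2) (half_pos εpos)
  obtain ⟨N1, hN1⟩ := Metric.tendsto_atTop.mp hA δa δapos
  obtain ⟨N2, hN2⟩ := Metric.tendsto_atTop.mp hB (ε / 2) (half_pos εpos)
  set n := max N1 N2 with hn
  have h1 : dist (b (a w)) (B n (a w)) ≤ ε / 2 := by
    rw [dist_comm]
    exact le_of_lt (lt_of_le_of_lt (ContinuousMap.dist_apply_le_dist (a w))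
      (hN2 n (le_max_right _ _)))
  have h2 : dist (B n (a w)) w ≤ ε / 2 := by
    have hd : dist (a w) (A n w) < δa := by
      rw [dist_comm]
      exact lt_of_le_of_lt (ContinuousMap.dist_apply_le_dist w) (hN1 n (le_max_left _ _))
    have := hδa n (a w) (A n w) hd
    rw [hid n w] at this
    exact le_of_lt this
  calc dist (b (a w)) w ≤ dist (b (a w)) (B n (a w)) + dist (B n (a w)) w :=
        dist_triangle _ _ _
    _ ≤ ε / 2 + ε / 2 := add_le_add h1 h2
    _ = ε := add_halves ε

lemma conj_mem_actionClosure {Ψ : H → Y ≃ₜ Y}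
    (hom : IsActionHom Ψ) (heq : IsEquicontinuousAction Ψ)
    {m : ℕ → H} {gh gi : C(Y, Y)}
    (h1 : Tendsto (fun n => ((Ψ (m n) : C(Y, Y)))) atTop (𝓝 gh))
    (h2 : Tendsto (fun n => ((Ψ (m n)⁻¹ : C(Y, Y)))) atTop (𝓝 gi))
    {ψ : C(Y, Y)} (hψ : ψ ∈ actionClosure Ψ) :
    gh.comp (ψ.comp gi) ∈ actionClosure Ψ := by
  have hψ' : ψ ∈ closure (Set.range fun k : H => (Ψ k : C(Y, Y))) := hψ
  refine Metric.mem_closure_iff.mpr fun ε εpos => ?_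
  obtain ⟨δa, δapos, hδa⟩ := heq (ε / 3) (by positivity)
  obtain ⟨δb, δbpos, hδb⟩ := heq δa δapos
  obtain ⟨N1, hN1⟩ := Metric.tendsto_atTop.mp h1 (ε / 3) (by positivity)
  obtain ⟨N2, hN2⟩ := Metric.tendsto_atTop.mp h2 δb δbpos
  obtain ⟨bf, ⟨g₀, rfl⟩, hg₀⟩ := Metric.mem_closure_iff.mp hψ' δa δapos
  set n := max N1 N2 with hn
  refine ⟨(Ψ (m n * g₀ * (m n)⁻¹) : C(Y, Y)), ⟨_, rfl⟩, ?_⟩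
  rw [ContinuousMap.dist_lt_iff εpos]
  intro z
  have e0 : (Ψ (m n * g₀ * (m n)⁻¹) : C(Y, Y)) z = Ψ (m n) (Ψ g₀ (Ψ (m n)⁻¹ z)) := by
    show Ψ (m n * g₀ * (m n)⁻¹) z = _
    rw [hom.2 (m n * g₀) ((m n)⁻¹) z, hom.2 (m n) g₀ _]
  have t3 : dist (gh (ψ (gi z))) (Ψ (m n) (ψ (gi z))) < ε / 3 := by
    rw [dist_comm]
    exact lt_of_le_of_lt
      (ContinuousMap.dist_apply_le_dist (f := (Ψ (m n) : C(Y, Y))) (g := gh) (ψ (gi z)))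
      (hN1 n (le_max_left _ _))
  have t2 : dist (Ψ (m n) (ψ (gi z))) (Ψ (m n) (Ψ g₀ (gi z))) < ε / 3 := by
    refine hδa (m n) _ _ ?_
    exact lt_of_le_of_lt
      (ContinuousMap.dist_apply_le_dist (f := ψ) (g := (Ψ g₀ : C(Y, Y))) (gi z)) hg₀
  have t1 : dist (Ψ (m n) (Ψ g₀ (gi z))) (Ψ (m n) (Ψ g₀ (Ψ (m n)⁻¹ z))) < ε / 3 := by
    refine hδa (m n) _ _ (hδb g₀ _ _ ?_)
    rw [dist_comm]
    exact lt_of_le_of_lt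
      (ContinuousMap.dist_apply_le_dist (f := (Ψ (m n)⁻¹ : C(Y, Y))) (g := gi) z)
      (hN2 n (le_max_right _ _))
  have htot : dist (gh (ψ (gi z))) (Ψ (m n) (Ψ g₀ (Ψ (m n)⁻¹ z))) < ε / 3 + ε / 3 + ε / 3 :=
    lt_of_le_of_lt (dist_triangle4 _ (Ψ (m n) (ψ (gi z))) (Ψ (m n) (Ψ g₀ (gi z))) _)
      (add_lt_add (add_lt_add t3 t2) t1)
  calc dist ((gh.comp (ψ.comp gi)) z) ((Ψ (m n * g₀ * (m n)⁻¹) : C(Y, Y)) z)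
      = dist (gh (ψ (gi z))) (Ψ (m n) (Ψ g₀ (Ψ (m n)⁻¹ z))) := by rw [e0]; rfl
    _ < ε / 3 + ε / 3 + ε / 3 := htot
    _ = ε := by ring

end AuxLemmas

lemma exists_uniform_cocycle {X : Type*} [MetricSpace X] [CompactSpace X]
    {X' : Type*} [MetricSpace X']
    {G : Type*} [Group G] [Group.FG G] {G' : Type*} [Group G']
    (Φ : G → X ≃ₜ X) (Ψ : G' → X' ≃ₜ X')
    (hΦ1 : IsActionHom Φ) (hΦe : IsEquicontinuousAction Φ) (hΨ1 : IsActionHom Ψ)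
    (h : X ≃ₜ X')
    (hc : ∀ (x : X) (g : G), ∃ (k : G') (O : Set X), IsOpen O ∧ x ∈ O ∧
      ∀ z ∈ O, Ψ k (h z) = h (Φ g z)) :
    ∃ δ : ℝ, 0 < δ ∧ ∀ (g : G) (x₀ : X), ∃ k : G', ∀ z : X, dist z x₀ < δ →
      Ψ k (h z) = h (Φ g z) := by
  classical
  have leb : ∀ g : G, ∃ δ : ℝ, 0 < δ ∧ ∀ x₀ : X, ∃ k : G', ∀ z : X, dist z x₀ < δ →
      Ψ k (h z) = h (Φ g z) := by
    intro g
    choose k O hO hxO hrel using fun x : X => hc x g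
    obtain ⟨δ, δpos, hδ⟩ := lebesgue_number_lemma_of_metric isCompact_univ hO
      (fun x _ => Set.mem_iUnion.mpr ⟨x, hxO x⟩)
    refine ⟨δ, δpos, fun x₀ => ?_⟩
    obtain ⟨i, hi⟩ := hδ x₀ (Set.mem_univ x₀)
    exact ⟨k i, fun z hz => hrel i z (hi (Metric.mem_ball.mpr hz))⟩
  choose δg δgpos hδg using leb
  obtain ⟨S, hScl, hSfin⟩ := Group.fg_iff.mp ‹Group.FG G›
  classical
  set T : Finset G := insert (1 : G) hSfin.toFinset with hT
  have hTne : T.Nonempty := ⟨1, Finset.mem_insert_self _ _⟩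
  set δ₀ : ℝ := T.inf' hTne fun s => min (δg s) (δg s⁻¹) with hδ₀
  have δ₀pos : 0 < δ₀ := by
    rw [hδ₀, Finset.lt_inf'_iff]
    exact fun i _ => lt_min (δgpos i) (δgpos i⁻¹)
  have hbound : ∀ s ∈ S, δ₀ ≤ δg s ∧ δ₀ ≤ δg s⁻¹ := by
    intro s hs
    have hmem : s ∈ T := Finset.mem_insert_of_mem (hSfin.mem_toFinset.mpr hs)
    exact ⟨(Finset.inf'_le _ hmem).trans (min_le_left _ _),
      (Finset.inf'_le _ hmem).trans (min_le_right _ _)⟩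
  obtain ⟨δ₁, δ₁pos, hδ₁⟩ := hΦe δ₀ δ₀pos
  refine ⟨min δ₁ δ₀, lt_min δ₁pos δ₀pos, fun g => ?_⟩
  have hg : g ∈ Subgroup.closure S := hScl ▸ Subgroup.mem_top g
  induction hg using Subgroup.closure_induction_left with
  | one =>
    exact fun x₀ => ⟨1, fun z _ => by rw [hΨ1.1, hΦ1.1]⟩
  | mul_left s hs y hy ih =>
    intro x₀
    obtain ⟨ky, hky⟩ := ih x₀
    obtain ⟨ks, hks⟩ := hδg s (Φ y x₀)
    refine ⟨ks * ky, fun z hz => ?_⟩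
    have h1 : dist (Φ y z) (Φ y x₀) < δg s :=
      lt_of_lt_of_le (hδ₁ y z x₀ (lt_of_lt_of_le hz (min_le_left _ _))) (hbound s hs).1
    have h2 := hks (Φ y z) h1
    have h3 := hky z hz
    rw [hΨ1.2 ks ky (h z), h3, h2, ← hΦ1.2 s y z]
  | inv_mul_cancel s hs y hy ih =>
    intro x₀
    obtain ⟨ky, hky⟩ := ih x₀
    obtain ⟨ks, hks⟩ := hδg s⁻¹ (Φ y x₀)
    refine ⟨ks * ky, fun z hz => ?_⟩
    have h1 : dist (Φ y z) (Φ y x₀) < δg s⁻¹ :=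
      lt_of_lt_of_le (hδ₁ y z x₀ (lt_of_lt_of_le hz (min_le_left _ _))) (hbound s hs).2
    have h2 := hks (Φ y z) h1
    have h3 := hky z hz
    rw [hΨ1.2 ks ky (h z), h3, h2, ← hΦ1.2 s⁻¹ y z]

/-- Stability is an invariant of continuous orbit equivalence (for
finitely generated acting group). -/
theorem stmt13 {X : Type*} [MetricSpace X] [CompactSpace X] [TotallyDisconnectedSpace X]
    [Nonempty X] (hX : Perfect (Set.univ : Set X))
    {X' : Type*} [MetricSpace X'] [CompactSpace X'] [TotallyDisconnectedSpace X']
    [Nonempty X'] (hX' : Perfect (Set.univ : Set X'))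
    {G : Type*} [Group G] [Countable G] [Group.FG G]
    {G' : Type*} [Group G'] [Countable G']
    (Φ : G → X ≃ₜ X) (hΦ : IsCantorAction Φ)
    (Ψ : G' → X' ≃ₜ X') (hΨ : IsCantorAction Ψ)
    (h : X ≃ₜ X') (hcoe : IsContinuousOrbitEquivalence Φ Ψ h)
    (hstable : ∃ (y' : X') (V : ℕ → Set X'), IsAdaptedBasis Ψ y' V ∧ IsStableChain Ψ V) :
    ∀ (x : X) (U : ℕ → Set X), IsAdaptedBasis Φ x U → IsStableChain Φ U := by
  obtain ⟨hΦhom, hΦmin, hΦeq⟩ := hΦ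
  obtain ⟨hΨhom, hΨmin, hΨeq⟩ := hΨ
  obtain ⟨y', V, hV, ℓ₀, hℓ₀⟩ := hstable
  intro x U hU
  have hcomp' : IsCompact (actionClosure Ψ) := isCompact_actionClosure Ψ hΨeq
  -- Step 1: local rigidity at y'
  have stab_y' : ∀ ψ ∈ actionClosure Ψ,
      (∃ N : Set X', IsOpen N ∧ y' ∈ N ∧ ∀ w ∈ N, ψ w = w) → ∀ w ∈ V ℓ₀, ψ w = w := by
    rintro ψ hψ ⟨N, hNo, hyN, hid⟩
    obtain ⟨ℓ₁, hℓ₁⟩ := basis_nbhd hV hNo hyN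
    have hmem : ψ ∈ stabChain Ψ V (max ℓ₁ ℓ₀) :=
      ⟨hψ, fun w hw => hid w (hℓ₁ (basis_antitone hV (le_max_left _ _) hw))⟩
    rw [hℓ₀ _ (le_max_right _ _)] at hmem
    exact hmem.2
  -- Step 2: transitivity of the Ellis group: move h x to y'
  set y : X' := h x with hy
  obtain ⟨u, hu_mem, hu_tend⟩ := mem_closure_iff_seq_limit.mp (hΨmin y y')
  choose kseq hkseq using hu_mem
  have hmem1 : ∀ n, (Ψ (kseq n) : C(X', X')) ∈ actionClosure Ψ :=
    fun n => subset_closure ⟨kseq n, rfl⟩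
  obtain ⟨gh, hghmem, φ1, hφ1mono, hφ1tend⟩ := hcomp'.tendsto_subseq hmem1
  have hmem2 : ∀ n, (Ψ (kseq (φ1 n))⁻¹ : C(X', X')) ∈ actionClosure Ψ :=
    fun n => subset_closure ⟨(kseq (φ1 n))⁻¹, rfl⟩
  obtain ⟨gi, hgimem, φ2, hφ2mono, hφ2tend⟩ := hcomp'.tendsto_subseq hmem2
  set m : ℕ → G' := fun n => kseq (φ1 (φ2 n)) with hm
  have hm1 : Tendsto (fun n => (Ψ (m n) : C(X', X'))) atTop (𝓝 gh) :=
    hφ1tend.comp hφ2mono.tendsto_atTop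
  have hm2 : Tendsto (fun n => (Ψ (m n)⁻¹ : C(X', X'))) atTop (𝓝 gi) := hφ2tend
  -- gh y = y'
  have hghy : gh y = y' := by
    have t1 : Tendsto (fun n => Ψ (m n) y) atTop (𝓝 (gh y)) :=
      ((continuous_eval_const y).tendsto gh).comp hm1
    have t2 : Tendsto (fun n => Ψ (m n) y) atTop (𝓝 y') := by
      have hfun : (fun n => Ψ (m n) y) = u ∘ (fun n => φ1 (φ2 n)) :=
        funext fun n => hkseq (φ1 (φ2 n))
      rw [hfun]
      exact hu_tend.comp (hφ1mono.comp hφ2mono).tendsto_atTop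
    exact tendsto_nhds_unique t1 t2
  -- inverses
  have heqinv : ∀ ε : ℝ, 0 < ε → ∃ δ : ℝ, 0 < δ ∧ ∀ (n : ℕ) (w v : X'),
      dist w v < δ → dist ((Ψ (m n)⁻¹ : C(X', X')) w) ((Ψ (m n)⁻¹ : C(X', X')) v) < ε := by
    intro ε εpos
    obtain ⟨δ, δpos, hδ⟩ := hΨeq ε εpos
    exact ⟨δ, δpos, fun n w v hwv => hδ (m n)⁻¹ w v hwv⟩
  have heqfwd : ∀ ε : ℝ, 0 < ε → ∃ δ : ℝ, 0 < δ ∧ ∀ (n : ℕ) (w v : X'),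
      dist w v < δ → dist ((Ψ (m n) : C(X', X')) w) ((Ψ (m n) : C(X', X')) v) < ε := by
    intro ε εpos
    obtain ⟨δ, δpos, hδ⟩ := hΨeq ε εpos
    exact ⟨δ, δpos, fun n w v hwv => hδ (m n) w v hwv⟩
  have hinv1 : ∀ w : X', gi (gh w) = w := by
    refine comp_id_of_tendsto hm1 hm2 heqinv fun n w => ?_
    show Ψ (m n)⁻¹ (Ψ (m n) w) = w
    rw [← hΨhom.2 (m n)⁻¹ (m n) w, inv_mul_cancel, hΨhom.1]
  have hinv2 : ∀ w : X', gh (gi w) = w := by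
    refine comp_id_of_tendsto hm2 hm1 heqfwd fun n w => ?_
    show Ψ (m n) (Ψ (m n)⁻¹ w) = w
    rw [← hΨhom.2 (m n) (m n)⁻¹ w, mul_inv_cancel, hΨhom.1]
  -- Step 3: local rigidity at y = h x
  set Wy : Set X' := gh ⁻¹' (V ℓ₀) with hWy
  have hWyopen : IsOpen Wy := (hV.2.1 ℓ₀).2.1.2.preimage gh.continuous
  have hyWy : y ∈ Wy := by
    show gh y ∈ V ℓ₀
    rw [hghy]
    exact hV.2.2.1 ℓ₀
  have stab_y : ∀ ψ ∈ actionClosure Ψ,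
      (∃ N : Set X', IsOpen N ∧ y ∈ N ∧ ∀ w ∈ N, ψ w = w) → ∀ w ∈ Wy, ψ w = w := by
    rintro ψ hψ ⟨N, hNo, hyN, hid⟩ w hw
    have hconj : gh.comp (ψ.comp gi) ∈ actionClosure Ψ :=
      conj_mem_actionClosure hΨhom hΨeq hm1 hm2 hψ
    have hNid : ∀ v ∈ gi ⁻¹' N, (gh.comp (ψ.comp gi)) v = v := by
      intro v hv
      show gh (ψ (gi v)) = v
      rw [hid (gi v) hv, hinv2]
    have hy'mem : y' ∈ gi ⁻¹' N := by
      show gi y' ∈ N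
      rw [← hghy, hinv1]
      exact hyN
    have hfix : ∀ v ∈ V ℓ₀, (gh.comp (ψ.comp gi)) v = v :=
      stab_y' _ hconj ⟨gi ⁻¹' N, hNo.preimage gi.continuous, hy'mem, hNid⟩
    have hkey : gh (ψ (gi (gh w))) = gh w := hfix (gh w) hw
    rw [hinv1 w] at hkey
    calc ψ w = gi (gh (ψ w)) := (hinv1 _).symm
      _ = gi (gh w) := by rw [hkey]
      _ = w := hinv1 w
  -- Step 4: uniform cocycle for the COE
  obtain ⟨δ, δpos, hcoc⟩ := exists_uniform_cocycle Φ Ψ hΦhom hΦeq hΨhom h hcoe.1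
  -- Step 5: local rigidity for Φ at x
  set Wx : Set X := h ⁻¹' Wy ∩ Metric.ball x δ with hWx
  have hWxopen : IsOpen Wx := (hWyopen.preimage h.continuous).inter Metric.isOpen_ball
  have hxWx : x ∈ Wx := ⟨hyWy, Metric.mem_ball_self δpos⟩
  have stab_x : ∀ f ∈ actionClosure Φ,
      (∃ N : Set X, IsOpen N ∧ x ∈ N ∧ ∀ z ∈ N, f z = z) → ∀ z ∈ Wx, f z = z := by
    rintro f hf ⟨N, hNo, hxN, hid⟩
    have hf' : f ∈ closure (Set.range fun g : G => (Φ g : C(X, X))) := hf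
    obtain ⟨w, hw_mem, hw_tend⟩ := mem_closure_iff_seq_limit.mp hf'
    choose gseq hgseq using hw_mem
    choose ks hks using fun n => hcoc (gseq n) x
    have hmemk : ∀ n, (Ψ (ks n) : C(X', X')) ∈ actionClosure Ψ :=
      fun n => subset_closure ⟨ks n, rfl⟩
    obtain ⟨ψ, hψmem, φ, hφmono, hφtend⟩ := hcomp'.tendsto_subseq hmemk
    have key : ∀ z : X, dist z x < δ → ψ (h z) = h (f z) := by
      intro z hz
      have e1 : Tendsto (fun n => Ψ (ks (φ n)) (h z)) atTop (𝓝 (ψ (h z))) :=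
        ((continuous_eval_const (h z)).tendsto ψ).comp hφtend
      have e2 : Tendsto (fun n => Φ (gseq (φ n)) z) atTop (𝓝 (f z)) := by
        have e2' : Tendsto (fun n => (w (φ n)) z) atTop (𝓝 (f z)) :=
          ((continuous_eval_const z).tendsto f).comp
            (hw_tend.comp hφmono.tendsto_atTop)
        have hfun : (fun n => Φ (gseq (φ n)) z) = fun n => (w (φ n)) z :=
          funext fun n => by rw [← hgseq (φ n)]; rfl
        rw [hfun]
        exact e2'
      have e3 : Tendsto (fun n => h (Φ (gseq (φ n)) z)) atTop (𝓝 (h (f z))) :=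
        (h.continuous.tendsto (f z)).comp e2
      have e4 : (fun n => Ψ (ks (φ n)) (h z)) = fun n => h (Φ (gseq (φ n)) z) :=
        funext fun n => hks (φ n) z hz
      rw [e4] at e1
      exact tendsto_nhds_unique e1 e3
    have hψid : ∀ w' ∈ h '' (N ∩ Metric.ball x δ), ψ w' = w' := by
      rintro w' ⟨z, ⟨hzN, hzb⟩, rfl⟩
      rw [key z (Metric.mem_ball.mp hzb), hid z hzN]
    have hball : ∀ w' ∈ Wy, ψ w' = w' :=
      stab_y ψ hψmem ⟨h '' (N ∩ Metric.ball x δ),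
        (Homeomorph.isOpen_image h).mpr (hNo.inter Metric.isOpen_ball),
        ⟨x, ⟨hxN, Metric.mem_ball_self δpos⟩, rfl⟩, hψid⟩
    intro z hz
    have h1 : ψ (h z) = h z := hball (h z) hz.1
    have h2 : ψ (h z) = h (f z) := key z (Metric.mem_ball.mp hz.2)
    exact h.injective (h2.symm.trans h1)
  -- Step 6: conclude stability of the chain
  obtain ⟨ℓs, hℓs⟩ := basis_nbhd hU hWxopen hxWx
  refine ⟨ℓs, fun ℓ hℓ => Set.Subset.antisymm ?_ ?_⟩
  · rintro f ⟨hf1, hf2⟩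
    refine ⟨hf1, fun z hz => ?_⟩
    exact stab_x f hf1 ⟨U ℓ, (hU.2.1 ℓ).2.1.2, hU.2.2.1 ℓ, hf2⟩ z (hℓs hz)
  · rintro f ⟨hf1, hf2⟩
    exact ⟨hf1, fun z hz => hf2 z (basis_antitone hU hℓ hz)⟩
end

section
/- Let (X,G,Φ) be a Cantor action, let f ∈ G(Φ) be a non-Hausdorff element at x ∈ X, and let {U_ℓ} be an adapted neighborhood basis at x with group chain G_ℓ = G_{U_ℓ}. Define for each ℓ the stabilizer group K_ℓ := {h ∈ G(Φ) : h(z) = z for all z ∈ U_ℓ} and the centralizer group Z_ℓ := {h ∈ G(Φ) : h(x) = x and h ∘ Φ(g) = Φ(g) ∘ h for all g ∈ G_ℓ}. Then there are infinitely many ℓ for which Z_ℓ is a proper subset of K_ℓ; that is, the action is dynamically wild. -/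
open Set Topology Filter

section AuxStmt18

variable {X : Type*} [MetricSpace X] {G : Type*} [Group G]

theorem aux18_inv_apply {Φ : G → X ≃ₜ X} (hΦ : IsActionHom Φ) (g : G) (z : X) :
    Φ g⁻¹ (Φ g z) = z := by
  have h := hΦ.2 g⁻¹ g z
  rw [inv_mul_cancel] at h
  rw [← h]
  exact hΦ.1 z

theorem aux18_inv_apply' {Φ : G → X ≃ₜ X} (hΦ : IsActionHom Φ) (g : G) (z : X) :
    Φ g (Φ g⁻¹ z) = z := by
  have h := aux18_inv_apply hΦ g⁻¹ z
  rwa [inv_inv] at h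

theorem aux18_mul_image {Φ : G → X ≃ₜ X} (hΦ : IsActionHom Φ) (g h : G) (s : Set X) :
    Φ (g * h) '' s = Φ g '' (Φ h '' s) := by
  have hc : ⇑(Φ (g * h)) = ⇑(Φ g) ∘ ⇑(Φ h) := funext fun z => hΦ.2 g h z
  rw [hc, Set.image_comp]

theorem aux18_inv_image {Φ : G → X ≃ₜ X} (hΦ : IsActionHom Φ) (g : G) (s : Set X) :
    Φ g⁻¹ '' (Φ g '' s) = s := by
  rw [Set.image_image]
  have : (fun z => Φ g⁻¹ (Φ g z)) = fun z : X => z := funext fun z => aux18_inv_apply hΦ g z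
  rw [this, Set.image_id']

theorem aux18_stab_inv {Φ : G → X ≃ₜ X} (hΦ : IsActionHom Φ) {V : Set X} {b : G}
    (hb : Φ b '' V = V) : Φ b⁻¹ '' V = V := by
  conv_lhs => rw [← hb]
  exact aux18_inv_image hΦ b V

theorem aux18_stab_mul {Φ : G → X ≃ₜ X} (hΦ : IsActionHom Φ) {V : Set X} {b c : G}
    (hb : Φ b '' V = V) (hc : Φ c '' V = V) : Φ (b * c) '' V = V := by
  rw [aux18_mul_image hΦ, hc, hb]

/-- The centralizer set is contained in the pointwise stabilizer set. -/
theorem aux18_Z_subset_K (Φ : G → X ≃ₜ X) (hΦ : IsCantorAction Φ) (x : X) {U : Set X}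
    (hUad : IsAdapted Φ U) (hx : x ∈ U) :
    {h ∈ actionClosure Φ | h x = x ∧
        ∀ g : G, Φ g '' U = U → ∀ z : X, h (Φ g z) = Φ g (h z)}
      ⊆ {f ∈ actionClosure Φ | ∀ z ∈ U, f z = z} := by
  rintro h ⟨hcl, hx', hcomm⟩
  refine ⟨hcl, fun z hz => ?_⟩
  apply eq_of_forall_dist_le
  intro ε hε
  obtain ⟨δ, hδ, hδprop⟩ :=
    Metric.continuousAt_iff.1 (h.continuous.continuousAt (x := z)) (ε / 2) (by positivity)
  have hr : (0 : ℝ) < min δ (ε / 2) := lt_min hδ (by positivity)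
  have hopen : IsOpen (Metric.ball z (min δ (ε / 2)) ∩ U) :=
    Metric.isOpen_ball.inter hUad.2.1.isOpen
  have hne : (Metric.ball z (min δ (ε / 2)) ∩ U).Nonempty := ⟨z, Metric.mem_ball_self hr, hz⟩
  obtain ⟨w, ⟨g, rfl⟩, hw⟩ := (hΦ.2.1 x).exists_mem_open hopen hne
  have hgU : Φ g '' U = U := hUad.2.2 g ⟨Φ g x, ⟨x, hx, rfl⟩, hw.2⟩
  have h1 : h (Φ g x) = Φ g x := by rw [hcomm g hgU x, hx']
  have h2 : dist (Φ g x) z < min δ (ε / 2) := Metric.mem_ball.1 hw.1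
  have h3 : dist (h z) z < ε := by
    calc dist (h z) z ≤ dist (h z) (h (Φ g x)) + dist (h (Φ g x)) z := dist_triangle _ _ _
      _ < ε / 2 + ε / 2 := by
          apply add_lt_add
          · rw [dist_comm]
            exact hδprop (lt_of_lt_of_le h2 (min_le_left _ _))
          · rw [h1]
            exact lt_of_lt_of_le h2 (min_le_right _ _)
      _ = ε := by ring
  exact le_of_lt h3

/-- The closure of the orbit of any point under the stabilizer of an adapted set is a
neighborhood of that point. -/
theorem aux18_orbit_nhd [CompactSpace X] [Nonempty X] (Φ : G → X ≃ₜ X)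
    (hΦhom : IsActionHom Φ) (hmin : IsMinimalAction Φ) {V : Set X} (hV : IsAdapted Φ V)
    (x : X) :
    ∃ P : Set X, IsOpen P ∧ x ∈ P ∧
      P ⊆ closure {w : X | ∃ b : G, Φ b '' V = V ∧ Φ b x = w} := by
  classical
  set Orb := {w : X | ∃ b : G, Φ b '' V = V ∧ Φ b x = w} with hOrb
  obtain ⟨v, hv⟩ := hV.1
  -- finite cover of X by preimages of V
  have hcover : (Set.univ : Set X) ⊆ ⋃ g : G, ⇑(Φ g) ⁻¹' V := by
    intro z _
    obtain ⟨w, ⟨g, rfl⟩, hg⟩ := (hmin z).exists_mem_open hV.2.1.isOpen hV.1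
    exact Set.mem_iUnion.2 ⟨g, hg⟩
  obtain ⟨t, ht⟩ := isCompact_univ.elim_finite_subcover (fun g : G => ⇑(Φ g) ⁻¹' V)
    (fun g => hV.2.1.isOpen.preimage (Φ g).continuous) hcover
  -- every orbit point of x lies in a translate of Orb
  have hdecomp : ∀ g : G, ∃ c ∈ t, Φ g x ∈ ⇑(Φ c⁻¹) '' Orb := by
    intro g
    obtain ⟨c, hct, hc⟩ := Set.mem_iUnion₂.1 (ht (Set.mem_univ (Φ g v)))
    refine ⟨c, hct, ?_⟩
    have hcg : Φ (c * g) '' V = V :=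
      hV.2.2 (c * g) ⟨Φ (c * g) v, ⟨v, hv, rfl⟩, by rw [hΦhom.2 c g v]; exact hc⟩
    refine ⟨Φ (c * g) x, ⟨c * g, hcg, rfl⟩, ?_⟩
    have : Φ c⁻¹ (Φ (c * g) x) = Φ (c⁻¹ * (c * g)) x := (hΦhom.2 c⁻¹ (c * g) x).symm
    rw [this]
    have hcc : c⁻¹ * (c * g) = g := by group
    rw [hcc]
  -- X is covered by finitely many closed translates of `closure Orb`
  have hclosed_cover : (Set.univ : Set X) ⊆ ⋃ c ∈ t, ⇑(Φ c⁻¹) '' closure Orb := by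
    intro z _
    have hz : z ∈ closure (Set.range fun g : G => Φ g x) := hmin x z
    have hsub : (Set.range fun g : G => Φ g x) ⊆ ⋃ c ∈ t, ⇑(Φ c⁻¹) '' Orb := by
      rintro _ ⟨g, rfl⟩
      obtain ⟨c, hct, hc⟩ := hdecomp g
      exact Set.mem_biUnion hct hc
    have hCclosed : IsClosed (⋃ c ∈ t, ⇑(Φ c⁻¹) '' closure Orb) := by
      apply Set.Finite.isClosed_biUnion t.finite_toSet
      intro c _
      exact (Φ c⁻¹).isClosedMap _ isClosed_closure
    have hsub2 : (Set.range fun g : G => Φ g x) ⊆ ⋃ c ∈ t, ⇑(Φ c⁻¹) '' closure Orb := by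
      refine hsub.trans ?_
      refine Set.iUnion₂_mono fun c _ => ?_
      exact Set.image_mono subset_closure
    exact closure_minimal hsub2 hCclosed hz
  -- Baire category: one translate has nonempty interior
  have htne : t.Nonempty := by
    obtain ⟨c, hct, -⟩ := Set.mem_iUnion₂.1 (hclosed_cover (Set.mem_univ x))
    exact ⟨c, hct⟩
  haveI : Nonempty {c // c ∈ t} := ⟨⟨htne.choose, htne.choose_spec⟩⟩
  obtain ⟨c, hc⟩ := nonempty_interior_of_iUnion_of_closed
    (f := fun c : {c // c ∈ t} => ⇑(Φ (c : G)⁻¹) '' closure Orb)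
    (fun c => (Φ ((c : G))⁻¹).isClosedMap _ isClosed_closure)
    (by
      apply Set.eq_univ_of_univ_subset
      intro z hz
      obtain ⟨c, hct, hc⟩ := Set.mem_iUnion₂.1 (hclosed_cover hz)
      exact Set.mem_iUnion.2 ⟨⟨c, hct⟩, hc⟩)
  have hint : (interior (closure Orb)).Nonempty := by
    obtain ⟨w, hw⟩ := hc
    rw [← Homeomorph.image_interior] at hw
    obtain ⟨w', hw', -⟩ := hw
    exact ⟨w', hw'⟩
  obtain ⟨w₀, hw₀⟩ := hint
  obtain ⟨y, hyP, b₀, hb₀V, hb₀x⟩ :=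
    mem_closure_iff.1 (interior_subset hw₀) _ isOpen_interior hw₀
  refine ⟨⇑(Φ b₀) ⁻¹' (interior (closure Orb)),
    isOpen_interior.preimage (Φ b₀).continuous, by rwa [Set.mem_preimage, hb₀x], ?_⟩
  intro p hp
  have h1 : Φ b₀ p ∈ closure Orb := interior_subset hp
  have h2 : ⇑(Φ b₀⁻¹) '' Orb ⊆ Orb := by
    rintro _ ⟨w, ⟨s, hsV, rfl⟩, rfl⟩
    exact ⟨b₀⁻¹ * s, aux18_stab_mul hΦhom (aux18_stab_inv hΦhom hb₀V) hsV,
      hΦhom.2 b₀⁻¹ s x⟩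
  have h3 : p = Φ b₀⁻¹ (Φ b₀ p) := (aux18_inv_apply hΦhom b₀ p).symm
  rw [h3]
  have h4 : Φ b₀⁻¹ (Φ b₀ p) ∈ ⇑(Φ b₀⁻¹) '' closure Orb := ⟨_, h1, rfl⟩
  rw [(Φ b₀⁻¹).image_closure] at h4
  exact closure_mono h2 h4

end AuxStmt18

/-- In the presence of a non-Hausdorff element at `x`, the centralizer
group `Z_ℓ` is a proper subset of the stabilizer group `K_ℓ` for infinitely many `ℓ`:
the action is dynamically wild. -/
theorem stmt18 {X : Type*} [MetricSpace X] [CompactSpace X] [TotallyDisconnectedSpace X]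
    [Nonempty X] (hX : Perfect (Set.univ : Set X))
    {G : Type*} [Group G] [Countable G] (Φ : G → X ≃ₜ X) (hΦ : IsCantorAction Φ)
    (f : C(X, X)) (x : X) (hf : IsNonHausdorffElem Φ f x)
    (U : ℕ → Set X) (hU : IsAdaptedBasis Φ x U) :
    ∀ N : ℕ, ∃ ℓ : ℕ, N ≤ ℓ ∧
      {h ∈ actionClosure Φ | h x = x ∧
          ∀ g : G, Φ g '' U ℓ = U ℓ → ∀ z : X, h (Φ g z) = Φ g (h z)}
        ⊂ stabChain Φ U ℓ := by
  intro N
  by_contra hcon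
  push_neg at hcon
  obtain ⟨hΦhom, hmin, heqc⟩ := hΦ
  obtain ⟨hU0, hUad, hUx, hUchain, hUint⟩ := hU
  obtain ⟨hfcl, hfx, hfnot, xs, W, hxs, hW⟩ := hf
  have hclU : ∀ ℓ, IsClopen (U ℓ) := fun ℓ => (hUad ℓ).2.1
  have hanti : Antitone U := by
    refine (strictAnti_nat_of_succ_lt fun n => ?_).antitone
    exact Set.lt_iff_ssubset.2 (hUchain n)
  -- choose i with xs i ∈ U N
  obtain ⟨i, hiUN⟩ := (hxs.eventually_mem ((hclU N).isOpen.mem_nhds (hUx N))).exists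
  -- choose a with Φ a x ∈ W i ∩ U N
  have hWiU_open : IsOpen (W i ∩ U N) := (hW i).2.1.isOpen.inter (hclU N).isOpen
  have hWiU_ne : (W i ∩ U N).Nonempty := ⟨xs i, (hW i).1, hiUN⟩
  obtain ⟨w, ⟨a, rfl⟩, haW⟩ := (hmin x).exists_mem_open hWiU_open hWiU_ne
  -- choose m ≥ N with Φ a '' U m ⊆ W i ∩ U N
  have hO_open : IsOpen (⇑(Φ a) ⁻¹' (W i ∩ U N)) := hWiU_open.preimage (Φ a).continuous
  obtain ⟨m₀, hm₀⟩ := exists_subset_nhds_of_isCompact' (V := U) hanti.directed_ge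
    (fun ℓ => (hclU ℓ).isClosed.isCompact) (fun ℓ => (hclU ℓ).isClosed)
    (U := ⇑(Φ a) ⁻¹' (W i ∩ U N)) (by
      intro y hy
      rw [hUint] at hy
      rcases hy with rfl
      exact hO_open.mem_nhds haW)
  set m := max m₀ N with hm
  have hmN : N ≤ m := le_max_right _ _
  have hUm_sub : U m ⊆ ⇑(Φ a) ⁻¹' (W i ∩ U N) := (hanti (le_max_left m₀ N)).trans hm₀
  have hVsub : ∀ z ∈ U m, Φ a z ∈ W i ∩ U N := fun z hz => hUm_sub hz
  -- V := Φ a '' U m is adapted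
  set V := Φ a '' U m with hVdef
  have hV_ne : V.Nonempty := ⟨Φ a x, x, hUx m, rfl⟩
  have hV_clopen : IsClopen V :=
    ⟨(Φ a).isClosedMap _ (hclU m).isClosed, (Φ a).isOpenMap _ (hclU m).isOpen⟩
  have hV_adapted : IsAdapted Φ V := by
    refine ⟨hV_ne, hV_clopen, fun b ⟨w, hw1, hw2⟩ => ?_⟩
    have hw1' : Φ a⁻¹ w ∈ Φ (a⁻¹ * b * a) '' U m := by
      rw [aux18_mul_image hΦhom, aux18_mul_image hΦhom]
      exact ⟨w, hw1, rfl⟩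
    have hw2' : Φ a⁻¹ w ∈ U m := by
      obtain ⟨u, hu, rfl⟩ := hw2
      rw [aux18_inv_apply hΦhom]
      exact hu
    have heq : Φ (a⁻¹ * b * a) '' U m = U m := (hUad m).2.2 _ ⟨Φ a⁻¹ w, hw1', hw2'⟩
    have h5 : Φ b '' V = Φ a '' (Φ (a⁻¹ * b * a) '' U m) := by
      show Φ b '' (Φ a '' U m) = _
      rw [← aux18_mul_image hΦhom b a, ← aux18_mul_image hΦhom a (a⁻¹ * b * a)]
      have : a * (a⁻¹ * b * a) = b * a := by group
      rw [this]
    rw [h5, heq]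
  -- orbit of x under the stabilizer of V is dense near x
  obtain ⟨P, hPopen, hxP, hPsub⟩ := aux18_orbit_nhd Φ hΦhom hmin hV_adapted x
  obtain ⟨j, hjP⟩ := (hxs.eventually_mem (hPopen.mem_nhds hxP)).exists
  obtain ⟨y, hyW, b, hbV, hbx⟩ :=
    mem_closure_iff.1 (hPsub hjP) (W j) (hW j).2.1.isOpen (hW j).1
  have hbxW : Φ b x ∈ W j := by rwa [hbx]
  -- K_m ⊆ Z_m from the contradiction hypothesis
  have hZK := aux18_Z_subset_K Φ ⟨hΦhom, hmin, heqc⟩ x (hUad m) (hUx m)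
  have hKZ : stabChain Φ U m ⊆
      {h ∈ actionClosure Φ | h x = x ∧
        ∀ g : G, Φ g '' U m = U m → ∀ z : X, h (Φ g z) = Φ g (h z)} := by
    have hne := hcon m hmN
    have heqZK : {h ∈ actionClosure Φ | h x = x ∧
        ∀ g : G, Φ g '' U m = U m → ∀ z : X, h (Φ g z) = Φ g (h z)} = stabChain Φ U m := by
      by_contra hne'
      exact hne (ssubset_iff_subset_ne.2 ⟨hZK, hne'⟩)
    rw [heqZK]
  -- the conjugated element q
  set q : C(X, X) := ((Φ a⁻¹ : C(X, X)).comp (f.comp (Φ a : C(X, X)))) with hqdef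
  have hq_apply : ∀ u : X, q u = Φ a⁻¹ (f (Φ a u)) := fun u => rfl
  have hq_cl : q ∈ actionClosure Φ := by
    have hF : Continuous fun h : C(X, X) =>
        (Φ a⁻¹ : C(X, X)).comp (h.comp (Φ a : C(X, X))) :=
      (ContinuousMap.continuous_postcomp _).comp (ContinuousMap.continuous_precomp _)
    refine map_mem_closure hF hfcl ?_
    rintro _ ⟨g, rfl⟩
    refine ⟨a⁻¹ * (g * a), ?_⟩
    ext z
    show Φ (a⁻¹ * (g * a)) z = Φ a⁻¹ ((Φ g) (Φ a z))
    rw [hΦhom.2, hΦhom.2]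
  have hqK : q ∈ stabChain Φ U m := by
    refine ⟨hq_cl, fun z hz => ?_⟩
    rw [hq_apply]
    rw [(hW i).2.2.2 _ (hVsub z hz).1]
    exact aux18_inv_apply hΦhom a z
  obtain ⟨-, hqx, hqcomm⟩ := hKZ hqK
  -- derive a contradiction with the non-Hausdorff property of f at x
  refine hfnot (⇑(Φ b) ⁻¹' (W j)) ((hW j).2.1.preimage (Φ b).continuous) hbxW ?_
  intro z hz
  have hz' : Φ b z ∈ W j := hz
  -- commutation with g₀ = a⁻¹ * b⁻¹ * a
  have hg₀U : Φ (a⁻¹ * b⁻¹ * a) '' U m = U m := by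
    have hbinv : Φ b⁻¹ '' V = V := aux18_stab_inv hΦhom hbV
    calc Φ (a⁻¹ * b⁻¹ * a) '' U m = Φ a⁻¹ '' (Φ b⁻¹ '' (Φ a '' U m)) := by
          rw [aux18_mul_image hΦhom, aux18_mul_image hΦhom]
      _ = Φ a⁻¹ '' (Φ a '' U m) := by rw [← hVdef, hbinv, hVdef]
      _ = U m := aux18_inv_image hΦhom a _
  have hcomm₀ := hqcomm (a⁻¹ * b⁻¹ * a) hg₀U (Φ (a⁻¹ * b) z)
  have e1 : Φ (a⁻¹ * b⁻¹ * a) (Φ (a⁻¹ * b) z) = Φ a⁻¹ z := by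
    rw [← hΦhom.2]
    have : a⁻¹ * b⁻¹ * a * (a⁻¹ * b) = a⁻¹ := by group
    rw [this]
  have e2 : q (Φ (a⁻¹ * b) z) = Φ (a⁻¹ * b) z := by
    rw [hq_apply]
    have h6 : Φ a (Φ (a⁻¹ * b) z) = Φ b z := by
      rw [← hΦhom.2]
      have : a * (a⁻¹ * b) = b := by group
      rw [this]
    rw [h6, (hW j).2.2.2 _ hz', hΦhom.2]
  rw [e2, e1] at hcomm₀
  -- conclude f z = z
  have hfz : Φ a (q (Φ a⁻¹ z)) = f z := by
    rw [hq_apply, aux18_inv_apply' hΦhom a z, aux18_inv_apply' hΦhom a (f z)]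
  rw [← hfz, hcomm₀, aux18_inv_apply' hΦhom a z]
end
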